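/- Consider the one-step forward-difference gradient estimator built from an inexact function evaluation. Let f : ℝⁿ → ℝ be differentiable with gradient that is L-Lipschitz with respect to the Euclidean norm (L > 0), and let f̂ : ℝⁿ → ℝ satisfy |f̂(y) − f(y)| ≤ δ for all y ∈ ℝⁿ, where δ ≥ 0. Then for every x ∈ ℝⁿ, every μ > 0, and every coordinate index i ∈ {1,…,n}, the forward-difference estimate of the i-th partial derivative satisfies |(f̂(x + μ eᵢ) − f̂(x))/μ − ∂f/∂xᵢ(x)| ≤ (1/2)Lμ + 2δ/μ, where eᵢ is the i-th standard basis vector; consequently the vector of forward-difference estimates satisfies ‖∇̂f(x) − ∇f(x)‖_∞ ≤ (1/2)Lμ + 2δ/μ. -/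

import Mathlib

open scoped RealInnerProductSpace

/-- Descent lemma: quadratic upper bound for functions with Lipschitz gradient. -/
lemma descent_lemma {E : Type*} [NormedAddCommGroup E] [InnerProductSpace ℝ E] [CompleteSpace E]
    (f : E → ℝ) (f' : E → E) (hf : ∀ x, HasGradientAt f (f' x) x)
    (L : ℝ) (hL : 0 ≤ L)
    (hLip : ∀ y₁ y₂ : E, ‖f' y₁ - f' y₂‖ ≤ L * ‖y₁ - y₂‖)
    (x v : E) :
    |f (x + v) - f x - ⟪f' x, v⟫| ≤ L / 2 * ‖v‖ ^ 2 := by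
  set g : ℝ → ℝ := fun t => f (x + t • v) - t * ⟪f' x, v⟫ - f x with hg
  have hderiv : ∀ t : ℝ, HasDerivAt g (⟪f' (x + t • v), v⟫ - ⟪f' x, v⟫) t := by
    intro t
    have h1 : HasDerivAt (fun t : ℝ => x + t • v) v t := by
      simpa using ((hasDerivAt_id t).smul_const v).const_add x
    have h2 : HasDerivAt (fun t : ℝ => f (x + t • v)) ⟪f' (x + t • v), v⟫ t := by
      have := ((hf (x + t • v)).hasFDerivAt).comp_hasDerivAt t h1
      simpa [Function.comp_def] using this
    simpa [hg] using (h2.sub ((hasDerivAt_mul_const (⟪f' x, v⟫ : ℝ)).comp t (hasDerivAt_id t))).sub_const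
      (f x)
  have hB : ∀ t : ℝ, HasDerivAt (fun t : ℝ => L / 2 * ‖v‖ ^ 2 * t ^ 2) (L * ‖v‖ ^ 2 * t) t := by
    intro t
    have : HasDerivAt (fun t : ℝ => L / 2 * ‖v‖ ^ 2 * t ^ 2) (L / 2 * ‖v‖ ^ 2 * (2 * t)) t := by
      simpa using ((hasDerivAt_pow 2 t).const_mul (L / 2 * ‖v‖ ^ 2))
    convert this using 1; ring
  have bound : ∀ t ∈ Set.Ico (0:ℝ) 1,
      ‖⟪f' (x + t • v), v⟫ - ⟪f' x, v⟫‖ ≤ L * ‖v‖ ^ 2 * t := by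
    intro t ht
    have h3 : ‖f' (x + t • v) - f' x‖ ≤ L * (t * ‖v‖) := by
      have := hLip (x + t • v) x
      simpa [norm_smul, abs_of_nonneg ht.1] using this
    calc ‖⟪f' (x + t • v), v⟫ - ⟪f' x, v⟫‖ = ‖⟪f' (x + t • v) - f' x, v⟫‖ := by
          rw [← inner_sub_left]
      _ ≤ ‖f' (x + t • v) - f' x‖ * ‖v‖ := norm_inner_le_norm _ _
      _ ≤ L * (t * ‖v‖) * ‖v‖ := mul_le_mul_of_nonneg_right h3 (norm_nonneg v)
      _ = L * ‖v‖ ^ 2 * t := by ring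
  have key : ∀ t ∈ Set.Icc (0:ℝ) 1, ‖g t‖ ≤ L / 2 * ‖v‖ ^ 2 * t ^ 2 :=
    image_norm_le_of_norm_deriv_right_le_deriv_boundary
      (fun t _ => (hderiv t).continuousAt.continuousWithinAt)
      (fun t ht => (hderiv t).hasDerivWithinAt)
      (by simp [hg]) hB (fun t ht => bound t ht)
  have h1 := key 1 (by norm_num)
  have : g 1 = f (x + v) - f x - ⟪f' x, v⟫ := by simp [hg]; ring
  rw [this, Real.norm_eq_abs] at h1
  simpa using h1

/-- Forward-difference gradient estimation error with inexact function evaluations. -/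
theorem forward_difference_gradient_error
    {n : ℕ} (f fhat : EuclideanSpace ℝ (Fin n) → ℝ)
    (f' : EuclideanSpace ℝ (Fin n) → EuclideanSpace ℝ (Fin n))
    (hf : ∀ x, HasGradientAt f (f' x) x)
    (L : ℝ) (hL : 0 < L)
    (hLip : ∀ y₁ y₂ : EuclideanSpace ℝ (Fin n), ‖f' y₁ - f' y₂‖ ≤ L * ‖y₁ - y₂‖)
    (δ : ℝ) (hδ : 0 ≤ δ)
    (happrox : ∀ y, |fhat y - f y| ≤ δ) :
    ∀ (x : EuclideanSpace ℝ (Fin n)) (μ : ℝ), 0 < μ →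
      (∀ i : Fin n,
        |(fhat (x + μ • EuclideanSpace.single i (1 : ℝ)) - fhat x) / μ - f' x i|
          ≤ (1 / 2) * L * μ + 2 * δ / μ)
      ∧ ‖(fun i : Fin n =>
            (fhat (x + μ • EuclideanSpace.single i (1 : ℝ)) - fhat x) / μ - f' x i)‖
          ≤ (1 / 2) * L * μ + 2 * δ / μ := by
  intro x μ hμ
  have hcoord : ∀ i : Fin n,
      |(fhat (x + μ • EuclideanSpace.single i (1 : ℝ)) - fhat x) / μ - f' x i|
        ≤ (1 / 2) * L * μ + 2 * δ / μ := by
    intro i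
    set v : EuclideanSpace ℝ (Fin n) := μ • EuclideanSpace.single i (1 : ℝ) with hv
    have hnv : ‖v‖ = μ := by
      simp [hv, norm_smul, abs_of_pos hμ, EuclideanSpace.norm_single]
    have hinner : ⟪f' x, v⟫ = μ * f' x i := by
      rw [hv, real_inner_smul_right]
      simp [EuclideanSpace.inner_single_right]
    have hd : |f (x + v) - f x - μ * f' x i| ≤ L / 2 * μ ^ 2 := by
      have := descent_lemma f f' hf L hL.le hLip x v
      rwa [hinner, hnv] at this
    have h1 := happrox (x + v)
    have h2 := happrox x
    have habs : |fhat (x + v) - fhat x - μ * f' x i| ≤ L / 2 * μ ^ 2 + 2 * δ := by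
      have : fhat (x + v) - fhat x - μ * f' x i
          = (f (x + v) - f x - μ * f' x i) + (fhat (x + v) - f (x + v)) - (fhat x - f x) := by
        ring
      rw [this]
      calc |(f (x + v) - f x - μ * f' x i) + (fhat (x + v) - f (x + v)) - (fhat x - f x)|
          ≤ |(f (x + v) - f x - μ * f' x i) + (fhat (x + v) - f (x + v))| + |fhat x - f x| :=
            abs_sub _ _
        _ ≤ |f (x + v) - f x - μ * f' x i| + |fhat (x + v) - f (x + v)| + |fhat x - f x| := by
            exact add_le_add (abs_add_le _ _) le_rfl
        _ ≤ L / 2 * μ ^ 2 + δ + δ := by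
            exact add_le_add (add_le_add hd h1) h2
        _ = L / 2 * μ ^ 2 + 2 * δ := by ring
    have : (fhat (x + v) - fhat x) / μ - f' x i = (fhat (x + v) - fhat x - μ * f' x i) / μ := by
      field_simp
    rw [this, abs_div, abs_of_pos hμ]
    rw [div_le_iff₀ hμ]
    calc |fhat (x + v) - fhat x - μ * f' x i| ≤ L / 2 * μ ^ 2 + 2 * δ := habs
      _ = ((1 / 2) * L * μ + 2 * δ / μ) * μ := by field_simp
  refine ⟨hcoord, ?_⟩
  have hpos : 0 ≤ (1 / 2) * L * μ + 2 * δ / μ := by positivity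
  rw [pi_norm_le_iff_of_nonneg hpos]
  intro i
  simpa [Real.norm_eq_abs] using hcoord i
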